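/- arXiv:2503.22082 — 2 statements merged into one kernel-verified Lean document; each statement's English description precedes it below -/
import Mathlib

section
/- (Proposition 2, measure form) Let f be a ReLU network as defined and let the input x be a Gaussian-mixture random vector with law μ = Σ_{k=1}^K α_k N(μ_k, Σ_k). Then the law of the output y = f(x) decomposes as a mixture of truncated Gaussians pushed through affine maps: law(f(x)) = Σ_{ζ' ∈ {0,1}^N} Σ_{k=1}^K α_k · (g_{ζ'})_* ( N(μ_k, Σ_k) restricted to K(ζ') ), where g_{ζ'}(x) = C_L x + d_L is the affine map determined by ζ'. In particular, for a Gaussian-mixture input and piecewise affine f, the output is distributed as a mixture of truncated Gaussians. -/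
open Matrix MeasureTheory ProbabilityTheory

namespace ReluPaper

variable {n : ℕ → ℕ}

/-- Hidden representations of the ReLU network: `hid W b x ℓ` is the paper's
`h_{ℓ+1}(x)`, so that for a network with `L = M + 1` layers the output is
`f(x) = h_L(x) = hid W b x M`. -/
noncomputable def hid (W : ∀ ℓ : ℕ, Matrix (Fin (n (ℓ + 1))) (Fin (n ℓ)) ℝ)
    (b : ∀ ℓ : ℕ, Fin (n (ℓ + 1)) → ℝ) (x : Fin (n 0) → ℝ) :
    ∀ ℓ : ℕ, Fin (n (ℓ + 1)) → ℝ
  | 0 => W 0 *ᵥ x + b 0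
  | ℓ + 1 => W (ℓ + 1) *ᵥ (fun i => max 0 (hid W b x ℓ i)) + b (ℓ + 1)

/-- The matrices `C_ℓ` of the paper (0-indexed: `Cmat W z ℓ` is the paper's `C_{ℓ+1}`),
built from an activation pattern `z` via `C₁ = W₁`, `C_ℓ = W_ℓ diag(z_{ℓ-1}) C_{ℓ-1}`. -/
noncomputable def Cmat (W : ∀ ℓ : ℕ, Matrix (Fin (n (ℓ + 1))) (Fin (n ℓ)) ℝ)
    (z : ∀ ℓ : ℕ, Fin (n (ℓ + 1)) → ℝ) :
    ∀ ℓ : ℕ, Matrix (Fin (n (ℓ + 1))) (Fin (n 0)) ℝ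
  | 0 => W 0
  | ℓ + 1 => W (ℓ + 1) * Matrix.diagonal (z ℓ) * Cmat W z ℓ

/-- The vectors `d_ℓ` of the paper (0-indexed: `dvec W b z ℓ` is the paper's `d_{ℓ+1}`),
via `d₁ = b₁`, `d_ℓ = W_ℓ diag(z_{ℓ-1}) d_{ℓ-1} + b_ℓ`. -/
noncomputable def dvec (W : ∀ ℓ : ℕ, Matrix (Fin (n (ℓ + 1))) (Fin (n ℓ)) ℝ)
    (b : ∀ ℓ : ℕ, Fin (n (ℓ + 1)) → ℝ) (z : ∀ ℓ : ℕ, Fin (n (ℓ + 1)) → ℝ) :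
    ∀ ℓ : ℕ, Fin (n (ℓ + 1)) → ℝ
  | 0 => b 0
  | ℓ + 1 => W (ℓ + 1) *ᵥ (Matrix.diagonal (z ℓ) *ᵥ dvec W b z ℓ) + b (ℓ + 1)

/-- `x` induces activation pattern `z`, i.e. `𝟙(h_ℓ) = z_ℓ` for every hidden layer
`ℓ = 1, …, L - 1` of a network with `L = M + 1` layers. -/
def inducesPattern (M : ℕ) (W : ∀ ℓ : ℕ, Matrix (Fin (n (ℓ + 1))) (Fin (n ℓ)) ℝ)
    (b : ∀ ℓ : ℕ, Fin (n (ℓ + 1)) → ℝ) (x : Fin (n 0) → ℝ)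
    (z : ∀ ℓ : ℕ, Fin (n (ℓ + 1)) → ℝ) : Prop :=
  ∀ ℓ < M, ∀ i, (if 0 < hid W b x ℓ i then (1 : ℝ) else 0) = z ℓ i

/-- The convex polytope `K(ζ')` of Lemma 1: the sign conditions
`(C̄^{(L-1)} x + d̄^{(L-1)})_i ≤ 0` where `ζ'_i = 0` and `> 0` where `ζ'_i = 1`,
written blockwise over the hidden layers `ℓ = 1, …, L - 1` (with `L = M + 1`). -/
def Kpoly (M : ℕ) (W : ∀ ℓ : ℕ, Matrix (Fin (n (ℓ + 1))) (Fin (n ℓ)) ℝ)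
    (b : ∀ ℓ : ℕ, Fin (n (ℓ + 1)) → ℝ)
    (z : ∀ ℓ : ℕ, Fin (n (ℓ + 1)) → ℝ) : Set (Fin (n 0) → ℝ) :=
  {x | ∀ ℓ < M, ∀ i,
    (z ℓ i = 0 → (Cmat W z ℓ *ᵥ x + dvec W b z ℓ) i ≤ 0) ∧
    (z ℓ i = 1 → 0 < (Cmat W z ℓ *ᵥ x + dvec W b z ℓ) i)}

/-- Index set for the stacked vector `[h₁ᵀ, …, h_{L-1}ᵀ]ᵀ` (with `L = M + 1`):
a hidden layer index together with a neuron index in that layer. -/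
abbrev PatIdx (M : ℕ) (n : ℕ → ℕ) := (ℓ : Fin M) × Fin (n (ℓ.1 + 1))

/-- The `{0,1}`-valued activation pattern associated with a boolean vector on the
stacked index set. -/
def zOf {M : ℕ} (s : PatIdx M n → Bool) : ∀ ℓ : ℕ, Fin (n (ℓ + 1)) → ℝ :=
  fun ℓ i => if h : ℓ < M then (if s ⟨⟨ℓ, h⟩, i⟩ then 1 else 0) else 0

-- measurability of affine maps
lemma measurable_affine {p q : ℕ} (A : Matrix (Fin p) (Fin q) ℝ) (d : Fin p → ℝ) :
    Measurable fun x : Fin q → ℝ => A *ᵥ x + d := by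
  have h1 : Measurable fun x : Fin q → ℝ => A *ᵥ x := by
    apply measurable_pi_lambda
    intro i
    simp only [Matrix.mulVec, dotProduct]
    exact Finset.measurable_sum _ fun j _ => (measurable_pi_apply j).const_mul _
  exact h1.add_const d

lemma measurable_hid (W : ∀ ℓ : ℕ, Matrix (Fin (n (ℓ + 1))) (Fin (n ℓ)) ℝ)
    (b : ∀ ℓ : ℕ, Fin (n (ℓ + 1)) → ℝ) (ℓ : ℕ) :
    Measurable fun x => hid W b x ℓ := by
  induction ℓ with
  | zero => exact measurable_affine _ _
  | succ ℓ ih =>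
    have hrelu : Measurable fun v : Fin (n (ℓ + 1)) → ℝ => fun i => max 0 (v i) :=
      measurable_pi_lambda _ fun i => measurable_const.max (measurable_pi_apply i)
    exact (measurable_affine (W (ℓ + 1)) (b (ℓ + 1))).comp (hrelu.comp ih)

-- the induced pattern
noncomputable def sOf (M : ℕ) (W : ∀ ℓ : ℕ, Matrix (Fin (n (ℓ + 1))) (Fin (n ℓ)) ℝ)
    (b : ∀ ℓ : ℕ, Fin (n (ℓ + 1)) → ℝ) (x : Fin (n 0) → ℝ) : PatIdx M n → Bool :=
  fun p => decide (0 < hid W b x p.1.1 p.2)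

-- on Kpoly, hid is affine
lemma hid_eq_affine_of_mem (M : ℕ) (W : ∀ ℓ : ℕ, Matrix (Fin (n (ℓ + 1))) (Fin (n ℓ)) ℝ)
    (b : ∀ ℓ : ℕ, Fin (n (ℓ + 1)) → ℝ) (s : PatIdx M n → Bool)
    (x : Fin (n 0) → ℝ) (hx : x ∈ Kpoly M W b (zOf s)) :
    ∀ ℓ ≤ M, hid W b x ℓ = Cmat W (zOf s) ℓ *ᵥ x + dvec W b (zOf s) ℓ := by
  intro ℓ hℓ
  induction ℓ with
  | zero => rfl
  | succ ℓ ih =>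
    have hℓM : ℓ < M := Nat.lt_of_succ_le hℓ
    have IH := ih (le_of_lt hℓM)
    have hrelu : (fun i => max 0 (hid W b x ℓ i)) =
        Matrix.diagonal (zOf s ℓ) *ᵥ hid W b x ℓ := by
      funext i
      rw [Matrix.mulVec_diagonal]
      have hcond := hx ℓ hℓM i
      have hz : zOf s ℓ i = 0 ∨ zOf s ℓ i = 1 := by
        unfold zOf
        rw [dif_pos hℓM]
        by_cases h : s ⟨⟨ℓ, hℓM⟩, i⟩ <;> simp [h]
      rcases hz with h0 | h1
      · have hle : hid W b x ℓ i ≤ 0 := by rw [IH]; exact hcond.1 h0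
        rw [h0]; simp [max_eq_left hle]
      · have hgt : 0 < hid W b x ℓ i := by rw [IH]; exact hcond.2 h1
        rw [h1]; simp [max_eq_right hgt.le]
    show W (ℓ + 1) *ᵥ (fun i => max 0 (hid W b x ℓ i)) + b (ℓ + 1) = _
    rw [hrelu, IH, Matrix.mulVec_add, Matrix.mulVec_add]
    show _ = (W (ℓ + 1) * Matrix.diagonal (zOf s ℓ) * Cmat W (zOf s) ℓ) *ᵥ x +
        (W (ℓ + 1) *ᵥ (Matrix.diagonal (zOf s ℓ) *ᵥ dvec W b (zOf s) ℓ) + b (ℓ + 1))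
    rw [← Matrix.mulVec_mulVec, ← Matrix.mulVec_mulVec]
    exact add_assoc _ _ _

-- hid is affine with pattern sOf x (unconditional)
lemma hid_eq_affine_sOf (M : ℕ) (W : ∀ ℓ : ℕ, Matrix (Fin (n (ℓ + 1))) (Fin (n ℓ)) ℝ)
    (b : ∀ ℓ : ℕ, Fin (n (ℓ + 1)) → ℝ) (x : Fin (n 0) → ℝ) :
    ∀ ℓ ≤ M, hid W b x ℓ =
      Cmat W (zOf (sOf M W b x)) ℓ *ᵥ x + dvec W b (zOf (sOf M W b x)) ℓ := by
  intro ℓ hℓ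
  set z := zOf (sOf M W b x) with hzdef
  induction ℓ with
  | zero => rfl
  | succ ℓ ih =>
    have hℓM : ℓ < M := Nat.lt_of_succ_le hℓ
    have IH := ih (le_of_lt hℓM)
    have hrelu : (fun i => max 0 (hid W b x ℓ i)) =
        Matrix.diagonal (z ℓ) *ᵥ hid W b x ℓ := by
      funext i
      rw [Matrix.mulVec_diagonal]
      have hz : z ℓ i = if 0 < hid W b x ℓ i then 1 else 0 := by
        rw [hzdef]; unfold zOf sOf
        rw [dif_pos hℓM]
        simp
      rw [hz]
      by_cases h : 0 < hid W b x ℓ i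
      · simp [h, max_eq_right h.le]
      · simp [h, max_eq_left (not_lt.mp h)]
    show W (ℓ + 1) *ᵥ (fun i => max 0 (hid W b x ℓ i)) + b (ℓ + 1) = _
    rw [hrelu, IH, Matrix.mulVec_add, Matrix.mulVec_add]
    show _ = (W (ℓ + 1) * Matrix.diagonal (z ℓ) * Cmat W z ℓ) *ᵥ x +
        (W (ℓ + 1) *ᵥ (Matrix.diagonal (z ℓ) *ᵥ dvec W b z ℓ) + b (ℓ + 1))
    rw [← Matrix.mulVec_mulVec, ← Matrix.mulVec_mulVec]
    exact add_assoc _ _ _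

-- membership
lemma mem_Kpoly_sOf (M : ℕ) (W : ∀ ℓ : ℕ, Matrix (Fin (n (ℓ + 1))) (Fin (n ℓ)) ℝ)
    (b : ∀ ℓ : ℕ, Fin (n (ℓ + 1)) → ℝ) (x : Fin (n 0) → ℝ) :
    x ∈ Kpoly M W b (zOf (sOf M W b x)) := by
  intro ℓ hℓ i
  have haff := hid_eq_affine_sOf M W b x ℓ (le_of_lt hℓ)
  have hz : zOf (sOf M W b x) ℓ i = if 0 < hid W b x ℓ i then 1 else 0 := by
    unfold zOf sOf
    rw [dif_pos hℓ]
    simp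
  constructor
  · intro h0
    rw [← haff]
    rw [hz] at h0
    by_cases h : 0 < hid W b x ℓ i
    · simp [h] at h0
    · exact not_lt.mp h
  · intro h1
    rw [← haff]
    rw [hz] at h1
    by_cases h : 0 < hid W b x ℓ i
    · exact h
    · simp [h] at h1

-- uniqueness
lemma eq_sOf_of_mem (M : ℕ) (W : ∀ ℓ : ℕ, Matrix (Fin (n (ℓ + 1))) (Fin (n ℓ)) ℝ)
    (b : ∀ ℓ : ℕ, Fin (n (ℓ + 1)) → ℝ) (s : PatIdx M n → Bool)
    (x : Fin (n 0) → ℝ) (hx : x ∈ Kpoly M W b (zOf s)) : s = sOf M W b x := by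
  funext p
  obtain ⟨⟨ℓ, hℓ⟩, i⟩ := p
  have haff := hid_eq_affine_of_mem M W b s x hx ℓ (le_of_lt hℓ)
  have hcond := hx ℓ hℓ i
  have hz : zOf s ℓ i = if s ⟨⟨ℓ, hℓ⟩, i⟩ then 1 else 0 := by
    unfold zOf; rw [dif_pos hℓ]
  unfold sOf
  by_cases h : s ⟨⟨ℓ, hℓ⟩, i⟩
  · have := hcond.2 (by rw [hz, if_pos h])
    rw [← haff] at this
    simp [h, this]
  · have := hcond.1 (by rw [hz, if_neg h])
    rw [← haff] at this
    simp [h, not_lt.mpr this]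

-- measurability of Kpoly
lemma measurableSet_Kpoly (M : ℕ) (W : ∀ ℓ : ℕ, Matrix (Fin (n (ℓ + 1))) (Fin (n ℓ)) ℝ)
    (b : ∀ ℓ : ℕ, Fin (n (ℓ + 1)) → ℝ) (z : ∀ ℓ : ℕ, Fin (n (ℓ + 1)) → ℝ) :
    MeasurableSet (Kpoly M W b z) := by
  have : Kpoly M W b z = ⋂ (ℓ : ℕ) (_ : ℓ < M) (i),
      ({x | z ℓ i = 0 → (Cmat W z ℓ *ᵥ x + dvec W b z ℓ) i ≤ 0} ∩
       {x | z ℓ i = 1 → 0 < (Cmat W z ℓ *ᵥ x + dvec W b z ℓ) i}) := by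
    ext x
    simp only [Kpoly, Set.mem_setOf_eq, Set.mem_iInter, Set.mem_inter_iff]
  rw [this]
  refine MeasurableSet.iInter fun ℓ => MeasurableSet.iInter fun hℓ =>
    MeasurableSet.iInter fun i => MeasurableSet.inter ?_ ?_
  · by_cases h : z ℓ i = 0
    · have : {x : Fin (n 0) → ℝ | z ℓ i = 0 → (Cmat W z ℓ *ᵥ x + dvec W b z ℓ) i ≤ 0} =
          {x | (Cmat W z ℓ *ᵥ x + dvec W b z ℓ) i ≤ 0} := by
        ext x; simp [h]
      rw [this]
      exact measurableSet_le ((measurable_affine _ _).eval) measurable_const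
    · have : {x : Fin (n 0) → ℝ | z ℓ i = 0 → (Cmat W z ℓ *ᵥ x + dvec W b z ℓ) i ≤ 0} =
          Set.univ := by ext x; simp [h]
      rw [this]; exact MeasurableSet.univ
  · by_cases h : z ℓ i = 1
    · have : {x : Fin (n 0) → ℝ | z ℓ i = 1 → 0 < (Cmat W z ℓ *ᵥ x + dvec W b z ℓ) i} =
          {x | 0 < (Cmat W z ℓ *ᵥ x + dvec W b z ℓ) i} := by ext x; simp [h]
      rw [this]
      exact measurableSet_lt measurable_const ((measurable_affine _ _).eval)
    · have : {x : Fin (n 0) → ℝ | z ℓ i = 1 → 0 < (Cmat W z ℓ *ᵥ x + dvec W b z ℓ) i} =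
          Set.univ := by ext x; simp [h]
      rw [this]; exact MeasurableSet.univ

/-- The multivariate (possibly degenerate) Gaussian distribution `N(m, S)` on `ι → ℝ`:
the pushforward of a standard Gaussian under the affine map `x ↦ m + √S x`
(with junk value `0` if `S` is not positive semidefinite, a case never used below). -/
noncomputable def mvGaussian {ι : Type*} [Fintype ι] [DecidableEq ι]
    (m : ι → ℝ) (S : Matrix ι ι ℝ) : Measure (ι → ℝ) :=
  letI := Classical.propDecidable S.PosSemidef
  if hS : S.PosSemidef then
    Measure.map (fun x => m + (hS.1.eigenvectorUnitary.1 * Matrix.diagonal (Real.sqrt ∘ hS.1.eigenvalues) *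
      (star hS.1.eigenvectorUnitary : Matrix ι ι ℝ)) *ᵥ x) (Measure.pi fun _ : ι => gaussianReal 0 1)
  else 0

/-- Proposition 2, measure form: for a Gaussian-mixture input, the law of
the output `y = f(x)` is the mixture, over activation patterns `ζ'` and mixture
components `k`, of the pushforwards under the affine maps `g_{ζ'}(x) = C_L x + d_L` of
the Gaussians `N(μ_k, Σ_k)` restricted (truncated) to `K(ζ')`. -/
theorem statement10
    (n : ℕ → ℕ) (M : ℕ)  -- the network has `L = M + 1` layers
    (W : ∀ ℓ : ℕ, Matrix (Fin (n (ℓ + 1))) (Fin (n ℓ)) ℝ)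
    (b : ∀ ℓ : ℕ, Fin (n (ℓ + 1)) → ℝ)
    (Kc : ℕ) (α : Fin Kc → ℝ) (hα : ∀ k, 0 < α k) (hαsum : ∑ k, α k = 1)
    (μmix : Fin Kc → Fin (n 0) → ℝ) (Smix : Fin Kc → Matrix (Fin (n 0)) (Fin (n 0)) ℝ)
    (hSpd : ∀ k, (Smix k).PosDef)
    {Ω : Type*} [MeasurableSpace Ω] (P : Measure Ω) [IsProbabilityMeasure P]
    (X : Ω → Fin (n 0) → ℝ) (hX : Measurable X)
    -- the input has Gaussian-mixture law `μ = ∑ k, α k • N(μ_k, Σ_k)`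
    (hlaw : P.map X = ∑ k, ENNReal.ofReal (α k) • mvGaussian (μmix k) (Smix k))
    :
    P.map (fun ω => hid W b (X ω) M) =
      ∑ s : PatIdx M n → Bool, ∑ k, ENNReal.ofReal (α k) •
        Measure.map (fun x => Cmat W (zOf s) M *ᵥ x + dvec W b (zOf s) M)
          ((mvGaussian (μmix k) (Smix k)).restrict (Kpoly M W b (zOf s))) := by
  classical
  have hfm : Measurable fun x => hid W b x M := measurable_hid W b M
  have hmap : P.map (fun ω => hid W b (X ω) M) = (P.map X).map (fun x => hid W b x M) := by
    rw [Measure.map_map hfm hX]; rfl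
  rw [hmap, hlaw]
  have hgm : ∀ s : PatIdx M n → Bool,
      Measurable fun x => Cmat W (zOf s) M *ᵥ x + dvec W b (zOf s) M :=
    fun s => measurable_affine _ _
  ext A hA
  have hpart : ∀ (ν : Measure (Fin (n 0) → ℝ)) (B : Set (Fin (n 0) → ℝ)), MeasurableSet B →
      ν B = ∑ s : PatIdx M n → Bool, ν (B ∩ Kpoly M W b (zOf s)) := by
    intro ν B hB
    have hcover : B = ⋃ s : PatIdx M n → Bool, B ∩ Kpoly M W b (zOf s) := by
      ext x
      simp only [Set.mem_iUnion, Set.mem_inter_iff]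
      constructor
      · intro hx; exact ⟨sOf M W b x, hx, mem_Kpoly_sOf M W b x⟩
      · rintro ⟨s, hx, -⟩; exact hx
    rw [show ν B = ν (⋃ s : PatIdx M n → Bool, B ∩ Kpoly M W b (zOf s)) from by rw [← hcover]]
    rw [measure_iUnion ?_ fun s => hB.inter (measurableSet_Kpoly M W b (zOf s)), tsum_fintype]
    intro s t hst
    refine Set.disjoint_left.mpr fun x hxs hxt => hst ?_
    rw [eq_sOf_of_mem M W b s x hxs.2, eq_sOf_of_mem M W b t x hxt.2]
  have hpre : ∀ s : PatIdx M n → Bool,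
      (fun x => hid W b x M) ⁻¹' A ∩ Kpoly M W b (zOf s) =
      (fun x => Cmat W (zOf s) M *ᵥ x + dvec W b (zOf s) M) ⁻¹' A ∩ Kpoly M W b (zOf s) := by
    intro s
    ext x
    simp only [Set.mem_inter_iff, Set.mem_preimage]
    constructor
    · rintro ⟨hx, hK⟩
      exact ⟨by rwa [← hid_eq_affine_of_mem M W b s x hK M le_rfl], hK⟩
    · rintro ⟨hx, hK⟩
      exact ⟨by rwa [hid_eq_affine_of_mem M W b s x hK M le_rfl], hK⟩
  rw [Measure.map_apply hfm hA, Measure.finset_sum_apply, Measure.finset_sum_apply]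
  have hterm : ∀ (s : PatIdx M n → Bool) (k : Fin Kc),
      (ENNReal.ofReal (α k) • Measure.map
          (fun x => Cmat W (zOf s) M *ᵥ x + dvec W b (zOf s) M)
          ((mvGaussian (μmix k) (Smix k)).restrict (Kpoly M W b (zOf s)))) A =
      ENNReal.ofReal (α k) *
        mvGaussian (μmix k) (Smix k)
          ((fun x => Cmat W (zOf s) M *ᵥ x + dvec W b (zOf s) M) ⁻¹' A ∩
            Kpoly M W b (zOf s)) := by
    intro s k
    rw [Measure.smul_apply, smul_eq_mul, Measure.map_apply (hgm s) hA,
      Measure.restrict_apply ((hgm s) hA)]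
  calc ∑ k, (ENNReal.ofReal (α k) • mvGaussian (μmix k) (Smix k))
        ((fun x => hid W b x M) ⁻¹' A)
      = ∑ k, ENNReal.ofReal (α k) *
          ∑ s : PatIdx M n → Bool, mvGaussian (μmix k) (Smix k)
            ((fun x => Cmat W (zOf s) M *ᵥ x + dvec W b (zOf s) M) ⁻¹' A ∩
              Kpoly M W b (zOf s)) := by
        refine Finset.sum_congr rfl fun k _ => ?_
        rw [Measure.smul_apply, smul_eq_mul,
          hpart (mvGaussian (μmix k) (Smix k)) _ (hfm hA)]
        congr 1
        exact Finset.sum_congr rfl fun s _ => by rw [hpre s]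
    _ = ∑ s : PatIdx M n → Bool, ∑ k,
          ENNReal.ofReal (α k) * mvGaussian (μmix k) (Smix k)
            ((fun x => Cmat W (zOf s) M *ᵥ x + dvec W b (zOf s) M) ⁻¹' A ∩
              Kpoly M W b (zOf s)) := by
        simp_rw [Finset.mul_sum]
        exact Finset.sum_comm
    _ = ∑ s : PatIdx M n → Bool,
          (∑ k, ENNReal.ofReal (α k) • Measure.map
            (fun x => Cmat W (zOf s) M *ᵥ x + dvec W b (zOf s) M)
            ((mvGaussian (μmix k) (Smix k)).restrict (Kpoly M W b (zOf s)))) A := by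
        refine Finset.sum_congr rfl fun s _ => ?_
        rw [Measure.finset_sum_apply]
        exact Finset.sum_congr rfl fun k _ => (hterm s k).symm


end ReluPaper
end

section
/- Let f be a ReLU network as defined and let the input x be a Gaussian-mixture random vector with law μ = Σ_{k=1}^K α_k N(μ_k, Σ_k). Fix a binary vector ζ' ∈ {0,1}^N, and set μ̃_{k,ζ'} = C̄^{(L)} μ_k + d̄^{(L)} and Σ̃_{k,ζ'} = C̄^{(L)} Σ_k (C̄^{(L)})ᵀ, assumed invertible for all k. Then for every φ ∈ ℝ^{n_L}, the joint probability that the output lies below φ and the activation pattern equals ζ' satisfies: P( f(x) < φ componentwise and ζ(x) = ζ' ) = Σ_{k=1}^K α_k · N(μ̃_{k,ζ'}, Σ̃_{k,ζ'})( { (u, w) ∈ ℝ^N × ℝ^{n_L} : u ∈ O(ζ') and w < φ componentwise } ). -/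
open Matrix MeasureTheory ProbabilityTheory

namespace ReluPaper

variable {n : ℕ → ℕ}

noncomputable def psqrt {ι : Type*} [Fintype ι] [DecidableEq ι] {S : Matrix ι ι ℝ}
    (hS : S.PosSemidef) : Matrix ι ι ℝ :=
  hS.1.eigenvectorUnitary.1 * Matrix.diagonal (Real.sqrt ∘ hS.1.eigenvalues) *
    (star hS.1.eigenvectorUnitary : Matrix ι ι ℝ)

lemma psqrt_eq {ι : Type*} [Fintype ι] [DecidableEq ι] {S : Matrix ι ι ℝ}
    (hS : S.PosSemidef) : hS.1.eigenvectorUnitary.1 * Matrix.diagonal (Real.sqrt ∘ hS.1.eigenvalues) *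
      (star hS.1.eigenvectorUnitary : Matrix ι ι ℝ) = psqrt hS := rfl

lemma psqrt_transpose {ι : Type*} [Fintype ι] [DecidableEq ι] {S : Matrix ι ι ℝ}
    (hS : S.PosSemidef) : (psqrt hS)ᵀ = psqrt hS := by
  unfold psqrt
  rw [Matrix.transpose_mul, Matrix.transpose_mul, Matrix.diagonal_transpose]
  have h1 : ((star hS.1.eigenvectorUnitary : Matrix ι ι ℝ))ᵀ = hS.1.eigenvectorUnitary.1 := by
    rw [Matrix.star_eq_conjTranspose,
      Matrix.conjTranspose_eq_transpose_of_trivial, Matrix.transpose_transpose]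
  have h2 : (hS.1.eigenvectorUnitary.1)ᵀ = (star hS.1.eigenvectorUnitary : Matrix ι ι ℝ) := by
    rw [Matrix.star_eq_conjTranspose,
      Matrix.conjTranspose_eq_transpose_of_trivial]
  rw [h1, h2, Matrix.mul_assoc]

lemma psqrt_mul_self {ι : Type*} [Fintype ι] [DecidableEq ι] {S : Matrix ι ι ℝ}
    (hS : S.PosSemidef) : psqrt hS * psqrt hS = S := by
  have hU := Unitary.coe_star_mul_self hS.1.eigenvectorUnitary
  have hD : Matrix.diagonal (Real.sqrt ∘ hS.1.eigenvalues) *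
      Matrix.diagonal (Real.sqrt ∘ hS.1.eigenvalues) =
      Matrix.diagonal (RCLike.ofReal ∘ hS.1.eigenvalues) := by
    rw [Matrix.diagonal_mul_diagonal]
    congr 1
    funext i
    simp [Real.mul_self_sqrt (hS.eigenvalues_nonneg i)]
  conv_rhs => rw [hS.1.spectral_theorem, Unitary.conjStarAlgAut_apply]
  unfold psqrt
  simp only [Matrix.mul_assoc]
  rw [← Matrix.mul_assoc (star hS.1.eigenvectorUnitary : Matrix ι ι ℝ)
    hS.1.eigenvectorUnitary.1, hU, Matrix.one_mul,
    ← Matrix.mul_assoc (Matrix.diagonal _) (Matrix.diagonal _), hD]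

/-! ### Auxiliary Gaussian theory -/

open scoped ENNReal Real

set_option linter.unusedSectionVars false

section GaussAux

variable {ι κ : Type*} [Fintype ι] [Fintype κ] [DecidableEq ι] [DecidableEq κ]

/-- The standard Gaussian measure on `ι → ℝ`. -/
noncomputable def stdg (ι : Type*) [Fintype ι] : Measure (ι → ℝ) :=
  Measure.pi fun _ : ι => gaussianReal 0 1

instance (ι : Type*) [Fintype ι] : IsProbabilityMeasure (stdg ι) := by
  unfold stdg; infer_instance

lemma measurable_mulVecFun (M : Matrix κ ι ℝ) : Measurable fun x : ι → ℝ => M *ᵥ x := by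
  apply measurable_pi_lambda
  intro i
  show Measurable fun x : ι → ℝ => ∑ j, M i j * x j
  exact Finset.measurable_sum _ fun j _ => (measurable_pi_apply j).const_mul _

lemma measurable_affineFun (M : Matrix κ ι ℝ) (c : κ → ℝ) :
    Measurable fun x : ι → ℝ => c + M *ᵥ x :=
  measurable_pi_lambda _ fun i =>
    (((measurable_pi_apply i).comp (measurable_mulVecFun M)).const_add (c i))

lemma measurable_affineFun' (M : Matrix κ ι ℝ) (d : κ → ℝ) :
    Measurable fun x : ι → ℝ => M *ᵥ x + d :=
  measurable_pi_lambda _ fun i =>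
    (((measurable_pi_apply i).comp (measurable_mulVecFun M)).add_const (d i))

theorem lintegral_pi_prod_fin {m : ℕ} (f : Fin m → ℝ → ℝ≥0∞) (hf : ∀ i, Measurable (f i)) :
    ∫⁻ x : Fin m → ℝ, ∏ i, f i (x i) ∂(Measure.pi fun _ => (volume : Measure ℝ)) =
      ∏ i, ∫⁻ t, f i t := by
  induction m with
  | zero => simp
  | succ m ih =>
    have hmp := (measurePreserving_piFinSuccAbove (fun _ : Fin (m + 1) => (volume : Measure ℝ)) 0)
    have hmeas : Measurable fun x : Fin (m + 1) → ℝ => ∏ i, f i (x i) :=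
      Finset.measurable_prod _ fun i _ => (hf i).comp (measurable_pi_apply i)
    rw [← (hmp.symm _).lintegral_comp hmeas]
    have hint : ∀ p : ℝ × (Fin m → ℝ),
        (∏ i, f i (((MeasurableEquiv.piFinSuccAbove (fun _ => ℝ) 0).symm p) i)) =
          f 0 p.1 * ∏ j : Fin m, f j.succ (p.2 j) := by
      intro p
      simp only [MeasurableEquiv.piFinSuccAbove_symm_apply, Fin.insertNthEquiv,
        Equiv.coe_fn_mk, Fin.insertNth_zero]
      rw [Fin.prod_univ_succ]
      simp [Fin.cons_zero, Fin.cons_succ]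
    simp_rw [hint]
    have hmeas2 : Measurable fun y : Fin m → ℝ => ∏ j : Fin m, f j.succ (y j) :=
      Finset.measurable_prod _ fun j _ => (hf _).comp (measurable_pi_apply j)
    rw [lintegral_prod_mul (hf 0).aemeasurable hmeas2.aemeasurable,
      ih (fun j => f j.succ) (fun j => hf _), Fin.prod_univ_succ]

theorem lintegral_pi_prod (f : ι → ℝ → ℝ≥0∞) (hf : ∀ i, Measurable (f i)) :
    ∫⁻ x : ι → ℝ, ∏ i, f i (x i) ∂(Measure.pi fun _ => (volume : Measure ℝ)) =
      ∏ i, ∫⁻ t, f i t := by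
  classical
  let e := (Fintype.equivFin ι).symm
  have h := measurePreserving_piCongrLeft (fun _ : ι => (volume : Measure ℝ)) e
  have hmeas : Measurable fun x : ι → ℝ => ∏ i, f i (x i) :=
    Finset.measurable_prod _ fun i _ => (hf i).comp (measurable_pi_apply i)
  rw [← h.lintegral_comp hmeas]
  have hint : ∀ x : Fin (Fintype.card ι) → ℝ,
      (∏ i, f i ((MeasurableEquiv.piCongrLeft (fun _ => ℝ) e) x i)) =
        ∏ j, f (e j) (x j) := by
    intro x
    rw [← e.prod_comp]
    exact Finset.prod_congr rfl fun j _ => by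
      rw [MeasurableEquiv.piCongrLeft_apply_apply]
  simp_rw [hint]
  rw [lintegral_pi_prod_fin _ (fun j => hf (e j)), ← e.prod_comp]

theorem stdg_eq_withDensity (ι : Type*) [Fintype ι] :
    stdg ι = (volume : Measure (ι → ℝ)).withDensity fun x => ∏ i, gaussianPDF 0 1 (x i) := by
  classical
  rw [stdg]
  refine Measure.pi_eq fun s hs => ?_
  have hbox : MeasurableSet (Set.univ.pi s) := MeasurableSet.univ_pi hs
  rw [withDensity_apply _ hbox, ← lintegral_indicator hbox]
  have hind : ∀ x : ι → ℝ,
      (Set.univ.pi s).indicator (fun x => ∏ i, gaussianPDF 0 1 (x i)) x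
        = ∏ i, (s i).indicator (gaussianPDF 0 1) (x i) := by
    intro x
    by_cases hx : x ∈ Set.univ.pi s
    · rw [Set.indicator_of_mem hx]
      exact Finset.prod_congr rfl fun i _ =>
        (Set.indicator_of_mem (hx i (Set.mem_univ i)) _).symm
    · rw [Set.indicator_of_notMem hx]
      rw [Set.mem_univ_pi] at hx
      push_neg at hx
      obtain ⟨i, hi⟩ := hx
      exact (Finset.prod_eq_zero (Finset.mem_univ i) (Set.indicator_of_notMem hi _)).symm
  simp_rw [hind]
  rw [show (volume : Measure (ι → ℝ)) = Measure.pi fun _ => (volume : Measure ℝ) from volume_pi]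
  rw [lintegral_pi_prod _ (fun i => (measurable_gaussianPDF 0 1).indicator (hs i))]
  exact Finset.prod_congr rfl fun i _ => by
    rw [lintegral_indicator (hs i), ← gaussianReal_apply 0 one_ne_zero]

lemma prod_gaussianPDF_eq (w : ι → ℝ) :
    ∏ i, gaussianPDF 0 1 (w i)
      = ENNReal.ofReal ((√(2 * Real.pi))⁻¹ ^ Fintype.card ι *
          Real.exp (-(∑ i, (w i) ^ 2) / 2)) := by
  have h1 : ∀ i, gaussianPDF 0 1 (w i) = ENNReal.ofReal (gaussianPDFReal 0 1 (w i)) :=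
    fun i => rfl
  simp_rw [h1]
  rw [← ENNReal.ofReal_prod_of_nonneg (fun i _ => gaussianPDFReal_nonneg 0 1 (w i))]
  congr 1
  simp only [gaussianPDFReal, sub_zero, NNReal.coe_one, mul_one]
  rw [Finset.prod_mul_distrib, Finset.prod_const, Finset.card_univ, ← Real.exp_sum]
  congr 1
  rw [← Finset.sum_div, ← Finset.sum_neg_distrib]

lemma sum_sq_mulVec_transpose (V : Matrix ι ι ℝ) (hVV : V * Vᵀ = 1) (y : ι → ℝ) :
    ∑ i, ((Vᵀ *ᵥ y) i) ^ 2 = ∑ i, (y i) ^ 2 := by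
  have hdot : ∀ w : ι → ℝ, ∑ i, (w i) ^ 2 = w ⬝ᵥ w := fun w =>
    Finset.sum_congr rfl fun i _ => sq (w i)
  rw [hdot, hdot]
  calc (Vᵀ *ᵥ y) ⬝ᵥ (Vᵀ *ᵥ y) = (y ᵥ* V) ⬝ᵥ (Vᵀ *ᵥ y) := by rw [mulVec_transpose]
    _ = y ⬝ᵥ (V *ᵥ (Vᵀ *ᵥ y)) := (dotProduct_mulVec _ _ _).symm
    _ = y ⬝ᵥ y := by rw [mulVec_mulVec, hVV, one_mulVec]

theorem stdg_map_orth (V : Matrix ι ι ℝ) (hV : Vᵀ * V = 1) :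
    (stdg ι).map (fun x => V *ᵥ x) = stdg ι := by
  have hVV : V * Vᵀ = 1 := mul_eq_one_comm.mp hV
  have hdet2 : V.det * V.det = 1 := by
    have h := congrArg Matrix.det hV
    rwa [Matrix.det_mul, Matrix.det_transpose, Matrix.det_one] at h
  have hdet0 : V.det ≠ 0 := by
    intro h; rw [h, zero_mul] at hdet2; exact zero_ne_one hdet2
  have habs : |V.det⁻¹| = 1 := by
    rcases mul_self_eq_one_iff.mp hdet2 with h | h <;> rw [h] <;> norm_num
  have hTmeas := measurable_mulVecFun V
  have hTmeas' := measurable_mulVecFun Vᵀ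
  have hinv1 : ∀ x, Vᵀ *ᵥ (V *ᵥ x) = x := fun x => by
    rw [mulVec_mulVec, hV, one_mulVec]
  have hG : Measurable fun x : ι → ℝ => ∏ i, gaussianPDF 0 1 (x i) :=
    Finset.measurable_prod _ fun i _ =>
      (measurable_gaussianPDF 0 1).comp (measurable_pi_apply i)
  have hGinv : ∀ y : ι → ℝ,
      (∏ i, gaussianPDF 0 1 ((Vᵀ *ᵥ y) i)) = ∏ i, gaussianPDF 0 1 (y i) := by
    intro y
    rw [prod_gaussianPDF_eq, prod_gaussianPDF_eq, sum_sq_mulVec_transpose V hVV]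
  have hvol : Measure.map (fun x : ι → ℝ => V *ᵥ x) volume = volume := by
    have h := Real.map_matrix_volume_pi_eq_smul_volume_pi (M := V) hdet0
    have hfun : ⇑(Matrix.toLin' V) = fun x : ι → ℝ => V *ᵥ x :=
      funext fun x => Matrix.toLin'_apply V x
    rw [hfun] at h
    rw [h, habs, ENNReal.ofReal_one, one_smul]
  refine Measure.ext fun s hs => ?_
  rw [Measure.map_apply hTmeas hs, stdg_eq_withDensity,
    withDensity_apply _ (hTmeas hs), withDensity_apply _ hs]
  have hmain := setLIntegral_map (μ := (volume : Measure (ι → ℝ)))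
    (f := fun y => ∏ i, gaussianPDF 0 1 ((Vᵀ *ᵥ y) i))
    (g := fun x : ι → ℝ => V *ᵥ x) hs (hG.comp hTmeas') hTmeas
  rw [hvol] at hmain
  calc ∫⁻ x in (fun x => V *ᵥ x) ⁻¹' s, ∏ i, gaussianPDF 0 1 (x i) ∂volume
      = ∫⁻ x in (fun x => V *ᵥ x) ⁻¹' s,
          ∏ i, gaussianPDF 0 1 ((Vᵀ *ᵥ (V *ᵥ x)) i) ∂volume := by
        simp_rw [hinv1]
    _ = ∫⁻ y in s, ∏ i, gaussianPDF 0 1 ((Vᵀ *ᵥ y) i) ∂volume := hmain.symm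
    _ = ∫⁻ y in s, ∏ i, gaussianPDF 0 1 (y i) ∂volume := by simp_rw [hGinv]

theorem stdg_map_coiso (U : Matrix κ ι ℝ) (hU : U * Uᵀ = 1) :
    (stdg ι).map (fun x => U *ᵥ x) = stdg κ := by
  classical
  have hinj : Function.Injective (fun y : κ → ℝ => Uᵀ *ᵥ y) := by
    intro a b hab
    have h := congrArg (fun w => U *ᵥ w) hab
    simpa [mulVec_mulVec, hU, one_mulVec] using h
  have hle : Fintype.card κ ≤ Fintype.card ι := by
    have h : Module.finrank ℝ (κ → ℝ) ≤ Module.finrank ℝ (ι → ℝ) := by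
      refine LinearMap.finrank_le_finrank_of_injective (f := Matrix.toLin' Uᵀ) ?_
      intro a b hab
      exact hinj (by simpa [Matrix.toLin'_apply] using hab)
    simpa [Module.finrank_pi] using h
  set m := Fintype.card ι - Fintype.card κ with hm
  have hcard : Fintype.card (κ ⊕ Fin m) = Fintype.card ι := by
    simp [Fintype.card_sum, hm, Nat.add_sub_cancel' hle]
  let v : κ ⊕ Fin m → EuclideanSpace ℝ ι :=
    Sum.elim (fun k => (WithLp.equiv 2 (ι → ℝ)).symm (U k)) (fun _ => 0)
  have hortho : Orthonormal ℝ (Set.restrict (Set.range Sum.inl) v) := by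
    rw [orthonormal_iff_ite]
    rintro ⟨_, k, rfl⟩ ⟨_, k', rfl⟩
    have hUkk : ∑ t, U k t * U k' t = if k = k' then 1 else 0 := by
      have h := congrFun (congrFun hU k) k'
      simpa [Matrix.mul_apply, Matrix.one_apply] using h
    have hinner : (inner ℝ (v (Sum.inl k)) (v (Sum.inl k')) : ℝ) = ∑ t, U k t * U k' t := by
      rw [PiLp.inner_apply]
      simp [v, WithLp.equiv_symm_apply, PiLp.toLp_apply, RCLike.inner_apply, conj_trivial]
      exact Finset.sum_congr rfl fun _ _ => mul_comm _ _
    change (inner ℝ (v (Sum.inl k)) (v (Sum.inl k')) : ℝ) = _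
    rw [hinner, hUkk]
    simp [Subtype.ext_iff]
  obtain ⟨B, hB⟩ := Orthonormal.exists_orthonormalBasis_extension_of_card_eq (𝕜 := ℝ)
    (by rw [finrank_euclideanSpace, hcard]) hortho
  let V : Matrix (κ ⊕ Fin m) ι ℝ := fun j i => (WithLp.equiv 2 (ι → ℝ)) (B j) i
  have hVrow : ∀ k, V (Sum.inl k) = U k := by
    intro k
    funext i
    have h := hB (Sum.inl k) ⟨k, rfl⟩
    simp [V, h, v, WithLp.equiv_symm_apply, PiLp.toLp_apply]
  have hVV : V * Vᵀ = 1 := by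
    ext j j'
    have h := (orthonormal_iff_ite (𝕜 := ℝ)).mp B.orthonormal j j'
    rw [PiLp.inner_apply] at h
    simp only [RCLike.inner_apply, conj_trivial] at h
    rw [Matrix.mul_apply]
    simp only [Matrix.transpose_apply]
    simpa [Matrix.one_apply, V, mul_comm] using h
  let e : ι ≃ κ ⊕ Fin m := Fintype.equivOfCardEq hcard.symm
  let V' : Matrix ι ι ℝ := V.submatrix e id
  have hV'V' : V' * V'ᵀ = 1 := by
    have ht : V'ᵀ = Vᵀ.submatrix id ⇑e := by
      ext i i'
      simp [V', Matrix.transpose_apply, Matrix.submatrix_apply]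
    show V' * V'ᵀ = 1
    rw [ht]
    have h2 : V.submatrix (⇑e) id * Vᵀ.submatrix id ⇑e = (V * Vᵀ).submatrix ⇑e ⇑e := by
      have h := Matrix.submatrix_mul_equiv (M := V) (N := Vᵀ) (e₁ := ⇑e)
        (e₂ := Equiv.refl ι) (e₃ := ⇑e)
      simpa using h
    rw [h2, hVV, Matrix.submatrix_one_equiv]
  have hV' : V'ᵀ * V' = 1 := mul_eq_one_comm.mp hV'V'
  have horth := stdg_map_orth V' hV'
  have hrow' : ∀ k, V' (e.symm (Sum.inl k)) = U k := by
    intro k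
    have h : V' (e.symm (Sum.inl k)) = V (e (e.symm (Sum.inl k))) := rfl
    rw [h, Equiv.apply_symm_apply, hVrow]
  let Pr : (ι → ℝ) → (κ → ℝ) := fun y k => y (e.symm (Sum.inl k))
  have hPr : Measurable Pr := measurable_pi_lambda _ fun k => measurable_pi_apply _
  have hcomp : (fun x : ι → ℝ => U *ᵥ x) = Pr ∘ (fun x => V' *ᵥ x) := by
    funext x
    funext k
    show (U *ᵥ x) k = (V' *ᵥ x) (e.symm (Sum.inl k))
    show U k ⬝ᵥ x = V' (e.symm (Sum.inl k)) ⬝ᵥ x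
    rw [hrow']
  rw [hcomp, ← Measure.map_map hPr (measurable_mulVecFun V'), horth]
  have h1 := measurePreserving_piCongrLeft (fun _ : κ ⊕ Fin m => gaussianReal 0 1) e
  have h2 := (measurePreserving_sumPiEquivProdPi_symm
    (fun _ : κ ⊕ Fin m => gaussianReal 0 1)).symm
    ((MeasurableEquiv.sumPiEquivProdPi (fun _ : κ ⊕ Fin m => ℝ)).symm)
  rw [MeasurableEquiv.symm_symm] at h2
  have hPr_eq : Pr = (Prod.fst ∘ ⇑(MeasurableEquiv.sumPiEquivProdPi (fun _ : κ ⊕ Fin m => ℝ)))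
      ∘ ⇑(MeasurableEquiv.piCongrLeft (fun _ : κ ⊕ Fin m => ℝ) e) := by
    funext y
    funext k
    show y (e.symm (Sum.inl k))
      = (MeasurableEquiv.piCongrLeft (fun _ : κ ⊕ Fin m => ℝ) e y) (Sum.inl k)
    conv_rhs => rw [show (Sum.inl k : κ ⊕ Fin m) = e (e.symm (Sum.inl k)) from
      (Equiv.apply_symm_apply e _).symm]
    rw [MeasurableEquiv.piCongrLeft_apply_apply]
  have hstdgι : stdg ι = Measure.pi fun i : ι =>
      (fun _ : κ ⊕ Fin m => gaussianReal 0 1) (e i) := rfl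
  rw [hPr_eq, ← Measure.map_map (measurable_fst.comp
      (MeasurableEquiv.sumPiEquivProdPi (fun _ : κ ⊕ Fin m => ℝ)).measurable)
    (MeasurableEquiv.piCongrLeft (fun _ : κ ⊕ Fin m => ℝ) e).measurable,
    hstdgι, h1.map_eq,
    ← Measure.map_map measurable_fst
      (MeasurableEquiv.sumPiEquivProdPi (fun _ : κ ⊕ Fin m => ℝ)).measurable,
    h2.map_eq]
  show ((Measure.pi fun _ : κ => gaussianReal 0 1).prod
      (Measure.pi fun _ : Fin m => gaussianReal 0 1)).fst = stdg κ
  rw [Measure.fst_prod]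
  rfl

lemma posDef_of_isUnit (C : Matrix κ ι ℝ) (S : Matrix ι ι ℝ)
    (hS : S.PosDef) (h : IsUnit (C * S * Cᵀ)) : (C * S * Cᵀ).PosDef := by
  have hherm : (C * S * Cᵀ).IsHermitian := by
    have h1 : (C * S * Cᵀ)ᵀ = C * S * Cᵀ := by
      rw [Matrix.transpose_mul, Matrix.transpose_mul, Matrix.transpose_transpose,
        (show Sᵀ = S from hS.1), ← Matrix.mul_assoc]
    exact h1
  refine Matrix.PosDef.of_dotProduct_mulVec_pos hherm fun x hx => ?_
  haveI := Matrix.invertibleOfIsUnitDet _ ((Matrix.isUnit_iff_isUnit_det _).mp h)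
  have hsplit : (C * S * Cᵀ) *ᵥ x = (C * S) *ᵥ (Cᵀ *ᵥ x) := by
    rw [mulVec_mulVec]
  have hquad : star x ⬝ᵥ ((C * S * Cᵀ) *ᵥ x)
      = star (Cᵀ *ᵥ x) ⬝ᵥ (S *ᵥ (Cᵀ *ᵥ x)) := by
    simp only [star_trivial]
    rw [hsplit, show (C * S) *ᵥ (Cᵀ *ᵥ x) = C *ᵥ (S *ᵥ (Cᵀ *ᵥ x)) from
      (mulVec_mulVec _ _ _).symm]
    rw [dotProduct_mulVec x C, ← mulVec_transpose]
  rw [hquad]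
  rcases eq_or_ne (Cᵀ *ᵥ x) 0 with hw | hw
  · exfalso
    apply hx
    have h0 : (C * S * Cᵀ) *ᵥ x = (C * S * Cᵀ) *ᵥ 0 := by
      rw [hsplit, hw, Matrix.mulVec_zero, Matrix.mulVec_zero]
    exact Matrix.mulVec_injective_of_invertible _ h0
  · exact hS.dotProduct_mulVec_pos hw

theorem stdg_map_affine (A : Matrix κ ι ℝ) (c : κ → ℝ) (hA : (A * Aᵀ).PosDef) :
    (stdg ι).map (fun x => c + A *ᵥ x) = mvGaussian c (A * Aᵀ) := by
  have hpsd : (A * Aᵀ).PosSemidef := hA.posSemidef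
  rw [mvGaussian, dif_pos hpsd, psqrt_eq hpsd]
  set Bm := psqrt hpsd with hBm
  have hBsym : Bmᵀ = Bm := psqrt_transpose hpsd
  have hBB : Bm * Bm = A * Aᵀ := psqrt_mul_self hpsd
  have hdet : IsUnit Bm.det := by
    have h1 : Bm.det * Bm.det = (A * Aᵀ).det := by rw [← Matrix.det_mul, hBB]
    have h2 : (A * Aᵀ).det ≠ 0 := ne_of_gt hA.det_pos
    exact isUnit_iff_ne_zero.mpr (fun h => h2 (by rw [← h1, h, mul_zero]))
  set U := Bm⁻¹ * A with hUdef
  have hBU : Bm * U = A := by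
    rw [hUdef, ← Matrix.mul_assoc, Matrix.mul_nonsing_inv _ hdet, Matrix.one_mul]
  have hUU : U * Uᵀ = 1 := by
    rw [hUdef, Matrix.transpose_mul, Matrix.transpose_nonsing_inv, hBsym]
    have h1 : A * (Aᵀ * Bm⁻¹) = Bm := by
      rw [← Matrix.mul_assoc, ← hBB, Matrix.mul_assoc, Matrix.mul_nonsing_inv _ hdet,
        Matrix.mul_one]
    rw [Matrix.mul_assoc, h1, Matrix.nonsing_inv_mul _ hdet]
  have hsplit : (fun x : ι → ℝ => c + A *ᵥ x)
      = (fun y : κ → ℝ => c + Bm *ᵥ y) ∘ (fun x => U *ᵥ x) := by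
    funext x
    simp [Function.comp, Matrix.mulVec_mulVec, hBU]
  rw [hsplit, ← Measure.map_map (measurable_affineFun Bm c) (measurable_mulVecFun U),
    stdg_map_coiso U hUU]
  rfl

theorem mvGaussian_map_affine (m : ι → ℝ) (S : Matrix ι ι ℝ) (hS : S.PosDef)
    (C : Matrix κ ι ℝ) (d : κ → ℝ) (hpd : (C * S * Cᵀ).PosDef) :
    (mvGaussian m S).map (fun x => C *ᵥ x + d)
      = mvGaussian (C *ᵥ m + d) (C * S * Cᵀ) := by
  have hSpsd := hS.posSemidef
  rw [mvGaussian, dif_pos hSpsd, psqrt_eq hSpsd]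
  have hgmeas : Measurable fun x : ι → ℝ => C *ᵥ x + d := measurable_affineFun' C d
  rw [Measure.map_map hgmeas (measurable_affineFun (psqrt hSpsd) m)]
  have hsq : (psqrt hSpsd)ᵀ = (psqrt hSpsd) := psqrt_transpose hSpsd
  have hAAt : (C * (psqrt hSpsd)) * (C * (psqrt hSpsd))ᵀ = C * S * Cᵀ := by
    rw [Matrix.transpose_mul, hsq]
    calc C * (psqrt hSpsd) * ((psqrt hSpsd) * Cᵀ)
        = C * ((psqrt hSpsd) * (psqrt hSpsd)) * Cᵀ := by
          rw [Matrix.mul_assoc C, Matrix.mul_assoc, Matrix.mul_assoc]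
      _ = C * S * Cᵀ := by rw [psqrt_mul_self hSpsd]
  have hcomp : ((fun x : ι → ℝ => C *ᵥ x + d) ∘ fun x => m + (psqrt hSpsd) *ᵥ x)
      = fun x => (C *ᵥ m + d) + (C * (psqrt hSpsd)) *ᵥ x := by
    funext x
    simp only [Function.comp_apply, Matrix.mulVec_add, ← Matrix.mulVec_mulVec]
    abel
  rw [hcomp]
  have h := stdg_map_affine (C * (psqrt hSpsd)) (C *ᵥ m + d) (by rw [hAAt]; exact hpd)
  rw [show stdg ι = Measure.pi fun _ : ι => gaussianReal 0 1 from rfl] at h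
  rw [h, hAAt]

end GaussAux

/-! ### Deterministic lemmas about the network -/

lemma hid_eq_affine (W : ∀ ℓ : ℕ, Matrix (Fin (n (ℓ + 1))) (Fin (n ℓ)) ℝ)
    (b : ∀ ℓ : ℕ, Fin (n (ℓ + 1)) → ℝ) (z : ∀ ℓ : ℕ, Fin (n (ℓ + 1)) → ℝ)
    (x : Fin (n 0) → ℝ) (ℓ : ℕ)
    (h : ∀ ℓ' < ℓ, ∀ i, (if 0 < hid W b x ℓ' i then (1 : ℝ) else 0) = z ℓ' i) :
    hid W b x ℓ = Cmat W z ℓ *ᵥ x + dvec W b z ℓ := by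
  induction ℓ with
  | zero => rfl
  | succ ℓ ih =>
    have ihh := ih (fun ℓ' hℓ' => h ℓ' (Nat.lt_succ_of_lt hℓ'))
    have hrelu : (fun i => max 0 (hid W b x ℓ i))
        = Matrix.diagonal (z ℓ) *ᵥ hid W b x ℓ := by
      funext i
      rw [Matrix.mulVec_diagonal]
      have hp := h ℓ (Nat.lt_succ_self ℓ) i
      rcases lt_or_ge 0 (hid W b x ℓ i) with hpos | hneg
      · rw [if_pos hpos] at hp
        rw [← hp, one_mul, max_eq_right hpos.le]
      · rw [if_neg (not_lt.mpr hneg)] at hp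
        rw [← hp, zero_mul, max_eq_left hneg]
    show W (ℓ + 1) *ᵥ (fun i => max 0 (hid W b x ℓ i)) + b (ℓ + 1) = _
    rw [hrelu, ihh]
    show _ = (W (ℓ + 1) * Matrix.diagonal (z ℓ) * Cmat W z ℓ) *ᵥ x
      + (W (ℓ + 1) *ᵥ (Matrix.diagonal (z ℓ) *ᵥ dvec W b z ℓ) + b (ℓ + 1))
    rw [Matrix.mulVec_add, Matrix.mulVec_add, Matrix.mulVec_mulVec, Matrix.mulVec_mulVec,
      Matrix.mulVec_mulVec]
    exact add_assoc _ _ _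

/-- joint probability of `{f(x) < φ}` and `{ζ(x) = ζ'}` as a mixture of
Gaussian measures of `{(u, w) : u ∈ O(ζ'), w < φ}`, using the stacked `C̄^{(L)}, d̄^{(L)}`
(the extra block row, indexed by `Sum.inr`, is `C_L, d_L`). -/
theorem statement11
    (n : ℕ → ℕ) (M : ℕ)  -- the network has `L = M + 1` layers
    (W : ∀ ℓ : ℕ, Matrix (Fin (n (ℓ + 1))) (Fin (n ℓ)) ℝ)
    (b : ∀ ℓ : ℕ, Fin (n (ℓ + 1)) → ℝ)
    (z : ∀ ℓ : ℕ, Fin (n (ℓ + 1)) → ℝ)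
    (hz : ∀ ℓ < M, ∀ i, z ℓ i = 0 ∨ z ℓ i = 1)  -- `ζ' ∈ {0,1}^N`
    (Kc : ℕ) (α : Fin Kc → ℝ) (hα : ∀ k, 0 < α k) (hαsum : ∑ k, α k = 1)
    (μmix : Fin Kc → Fin (n 0) → ℝ) (Smix : Fin Kc → Matrix (Fin (n 0)) (Fin (n 0)) ℝ)
    (hSpd : ∀ k, (Smix k).PosDef)
    {Ω : Type*} [MeasurableSpace Ω] (P : Measure Ω) [IsProbabilityMeasure P]
    (X : Ω → Fin (n 0) → ℝ) (hX : Measurable X)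
    -- the input has Gaussian-mixture law `μ = ∑ k, α k • N(μ_k, Σ_k)`
    (hlaw : P.map X = ∑ k, ENNReal.ofReal (α k) • mvGaussian (μmix k) (Smix k))
    -- the stacked matrix `C̄^{(L)}` and stacked vector `d̄^{(L)}`
    (Cbar : Matrix (PatIdx M n ⊕ Fin (n (M + 1))) (Fin (n 0)) ℝ)
    (hCbar₁ : ∀ (p : PatIdx M n) (j : Fin (n 0)),
      Cbar (Sum.inl p) j = Cmat W z (p.1 : ℕ) p.2 j)
    (hCbar₂ : ∀ (i : Fin (n (M + 1))) (j : Fin (n 0)), Cbar (Sum.inr i) j = Cmat W z M i j)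
    (dbar : PatIdx M n ⊕ Fin (n (M + 1)) → ℝ)
    (hdbar₁ : ∀ p : PatIdx M n, dbar (Sum.inl p) = dvec W b z (p.1 : ℕ) p.2)
    (hdbar₂ : ∀ i : Fin (n (M + 1)), dbar (Sum.inr i) = dvec W b z M i)
    -- `Σ̃_{k,ζ'} = C̄^{(L)} Σ_k C̄^{(L)ᵀ}` is invertible for all `k`
    (hinv : ∀ k, IsUnit (Cbar * Smix k * Cbarᵀ))
    (φ : Fin (n (M + 1)) → ℝ) :
    P {ω | (∀ j, hid W b (X ω) M j < φ j) ∧ inducesPattern M W b (X ω) z} =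
      ∑ k, ENNReal.ofReal (α k) *
        mvGaussian (Cbar *ᵥ μmix k + dbar) (Cbar * Smix k * Cbarᵀ)
          {v : PatIdx M n ⊕ Fin (n (M + 1)) → ℝ |
            (∀ p : PatIdx M n, (if 0 < v (Sum.inl p) then (1 : ℝ) else 0) = z (p.1 : ℕ) p.2) ∧
            (∀ j, v (Sum.inr j) < φ j)} := by
  classical
  set Bset : Set (PatIdx M n ⊕ Fin (n (M + 1)) → ℝ) :=
    {v : PatIdx M n ⊕ Fin (n (M + 1)) → ℝ |
      (∀ p : PatIdx M n, (if 0 < v (Sum.inl p) then (1 : ℝ) else 0) = z (p.1 : ℕ) p.2) ∧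
      (∀ j, v (Sum.inr j) < φ j)} with hBdef
  -- componentwise identification of the affine map
  have hg_inl : ∀ (x : Fin (n 0) → ℝ) (p : PatIdx M n),
      (Cbar *ᵥ x + dbar) (Sum.inl p)
        = (Cmat W z (p.1 : ℕ) *ᵥ x + dvec W b z (p.1 : ℕ)) p.2 := by
    intro x p
    show Cbar (Sum.inl p) ⬝ᵥ x + dbar (Sum.inl p)
      = Cmat W z (p.1 : ℕ) p.2 ⬝ᵥ x + dvec W b z (p.1 : ℕ) p.2
    rw [hdbar₁]
    congr 1
    show ∑ j, Cbar (Sum.inl p) j * x j = ∑ j, Cmat W z (p.1 : ℕ) p.2 j * x j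
    exact Finset.sum_congr rfl fun j _ => by rw [hCbar₁]
  have hg_inr : ∀ (x : Fin (n 0) → ℝ) (j : Fin (n (M + 1))),
      (Cbar *ᵥ x + dbar) (Sum.inr j) = (Cmat W z M *ᵥ x + dvec W b z M) j := by
    intro x j
    show Cbar (Sum.inr j) ⬝ᵥ x + dbar (Sum.inr j) = Cmat W z M j ⬝ᵥ x + dvec W b z M j
    rw [hdbar₂]
    congr 1
    show ∑ t, Cbar (Sum.inr j) t * x t = ∑ t, Cmat W z M j t * x t
    exact Finset.sum_congr rfl fun t _ => by rw [hCbar₂]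
  -- from the pattern of the affine image we recover the activation pattern
  have pat_of : ∀ x : Fin (n 0) → ℝ,
      (∀ p : PatIdx M n,
        (if 0 < (Cbar *ᵥ x + dbar) (Sum.inl p) then (1 : ℝ) else 0) = z (p.1 : ℕ) p.2) →
      ∀ ℓ, ℓ < M → ∀ i, (if 0 < hid W b x ℓ i then (1 : ℝ) else 0) = z ℓ i := by
    intro x hx ℓ
    induction ℓ using Nat.strong_induction_on with
    | _ ℓ IH =>
      intro hℓM i
      have haff := hid_eq_affine W b z x ℓ (fun ℓ' hℓ' i' => IH ℓ' hℓ' (hℓ'.trans hℓM) i')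
      have hxp := hx ⟨⟨ℓ, hℓM⟩, i⟩
      rw [hg_inl x ⟨⟨ℓ, hℓM⟩, i⟩] at hxp
      rw [haff]
      exact hxp
  -- the key deterministic equivalence
  have key : ∀ x : Fin (n 0) → ℝ,
      ((∀ j, hid W b x M j < φ j) ∧ inducesPattern M W b x z)
        ↔ (Cbar *ᵥ x + dbar) ∈ Bset := by
    intro x
    constructor
    · rintro ⟨hout, hpat⟩
      have haffM := hid_eq_affine W b z x M hpat
      refine ⟨fun p => ?_, fun j => ?_⟩
      · have haff := hid_eq_affine W b z x (p.1 : ℕ)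
          (fun ℓ' h' i' => hpat ℓ' (h'.trans p.1.isLt) i')
        rw [hg_inl x p, ← haff]
        exact hpat (p.1 : ℕ) p.1.isLt p.2
      · rw [hg_inr x j, ← haffM]
        exact hout j
    · rintro ⟨hp, hq⟩
      have hpat : inducesPattern M W b x z := fun ℓ hℓ i => pat_of x hp ℓ hℓ i
      refine ⟨fun j => ?_, hpat⟩
      have haffM := hid_eq_affine W b z x M hpat
      rw [haffM, ← hg_inr x j]
      exact hq j
  -- measurability
  have hBmeas : MeasurableSet Bset := by
    have h1 : MeasurableSet {v : PatIdx M n ⊕ Fin (n (M + 1)) → ℝ |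
        ∀ p : PatIdx M n, (if 0 < v (Sum.inl p) then (1 : ℝ) else 0) = z (p.1 : ℕ) p.2} := by
      have heq : {v : PatIdx M n ⊕ Fin (n (M + 1)) → ℝ |
          ∀ p : PatIdx M n, (if 0 < v (Sum.inl p) then (1 : ℝ) else 0) = z (p.1 : ℕ) p.2}
            = ⋂ p : PatIdx M n, {v : PatIdx M n ⊕ Fin (n (M + 1)) → ℝ |
              (if 0 < v (Sum.inl p) then (1 : ℝ) else 0) = z (p.1 : ℕ) p.2} := by
        ext v
        simp [Set.mem_iInter]
      rw [heq]
      refine MeasurableSet.iInter fun p => ?_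
      have hf : Measurable fun v : PatIdx M n ⊕ Fin (n (M + 1)) → ℝ =>
          (if 0 < v (Sum.inl p) then (1 : ℝ) else 0) := by
        refine Measurable.ite ?_ measurable_const measurable_const
        exact measurableSet_lt measurable_const (measurable_pi_apply _)
      exact hf (measurableSet_singleton _)
    have h2 : MeasurableSet {v : PatIdx M n ⊕ Fin (n (M + 1)) → ℝ |
        ∀ j, v (Sum.inr j) < φ j} := by
      have heq : {v : PatIdx M n ⊕ Fin (n (M + 1)) → ℝ | ∀ j, v (Sum.inr j) < φ j}
          = ⋂ j, {v : PatIdx M n ⊕ Fin (n (M + 1)) → ℝ | v (Sum.inr j) < φ j} := by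
        ext v
        simp [Set.mem_iInter]
      rw [heq]
      exact MeasurableSet.iInter fun j =>
        measurableSet_lt (measurable_pi_apply _) measurable_const
    exact h1.inter h2
  have hgmeas : Measurable fun x : Fin (n 0) → ℝ => Cbar *ᵥ x + dbar :=
    measurable_affineFun' Cbar dbar
  have hA_eq : {x : Fin (n 0) → ℝ | (∀ j, hid W b x M j < φ j) ∧ inducesPattern M W b x z}
      = (fun x => Cbar *ᵥ x + dbar) ⁻¹' Bset := Set.ext fun x => key x
  have hAmeas : MeasurableSet ((fun x : Fin (n 0) → ℝ => Cbar *ᵥ x + dbar) ⁻¹' Bset) :=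
    hgmeas hBmeas
  have hset : {ω | (∀ j, hid W b (X ω) M j < φ j) ∧ inducesPattern M W b (X ω) z}
      = X ⁻¹' ((fun x => Cbar *ᵥ x + dbar) ⁻¹' Bset) := by
    rw [← hA_eq]
    rfl
  rw [hset, ← Measure.map_apply hX hAmeas, hlaw, Measure.finset_sum_apply]
  refine Finset.sum_congr rfl fun k _ => ?_
  rw [Measure.smul_apply, smul_eq_mul]
  congr 1
  have hpd : (Cbar * Smix k * Cbarᵀ).PosDef :=
    posDef_of_isUnit Cbar (Smix k) (hSpd k) (hinv k)
  rw [← Measure.map_apply hgmeas hBmeas,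
    mvGaussian_map_affine (μmix k) (Smix k) (hSpd k) Cbar dbar hpd]

end ReluPaper
end
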